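/- Let A ∈ ℂ^{m×n} be arbitrary, let A† be its Moore–Penrose pseudoinverse, let S ⊆ {1,…,m}×{1,…,n} be an arbitrary sparsity pattern, and let F(A,S) be the corresponding feasible set. Then there exists a globally unique minimizer: there is exactly one X ∈ F(A,S) such that J(X;A) ≤ J(Y;A) for all Y ∈ F(A,S). -/

import Mathlib

open scoped Matrix

/-- `B` is the Moore–Penrose pseudoinverse of `A`. -/
def IsMPInv {m n : ℕ} (A : Matrix (Fin m) (Fin n) ℂ) (B : Matrix (Fin n) (Fin m) ℂ) : Prop :=
  A * B * A = A ∧ B * A * B = B ∧ (A * B)ᴴ = A * B ∧ (B * A)ᴴ = B * A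

/-- Squared Frobenius norm. -/
noncomputable def frobSq {m n : ℕ} (M : Matrix (Fin m) (Fin n) ℂ) : ℝ :=
  ∑ i, ∑ j, ‖M i j‖ ^ 2

/-- The misfit functional `J(X;A) = ½‖(X-A)A†‖_F² + ½‖A†(X-A)‖_F²`,
with the pseudoinverse `Ad` of `A` given explicitly. -/
noncomputable def Jmis {m n : ℕ} (X A : Matrix (Fin m) (Fin n) ℂ)
    (Ad : Matrix (Fin n) (Fin m) ℂ) : ℝ :=
  (1 / 2) * frobSq ((X - A) * Ad) + (1 / 2) * frobSq (Ad * (X - A))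

/-- The feasible set `F(A,S)`: the null space of `A` is contained in that of `X`,
the null space of `A*` in that of `X*`, and `X` vanishes outside the pattern `S`. -/
def Feasible {m n : ℕ} (A X : Matrix (Fin m) (Fin n) ℂ) (S : Set (Fin m × Fin n)) : Prop :=
  (∀ v : Fin n → ℂ, A.mulVec v = 0 → X.mulVec v = 0) ∧
  (∀ v : Fin m → ℂ, Aᴴ.mulVec v = 0 → Xᴴ.mulVec v = 0) ∧
  (∀ ij : Fin m × Fin n, ij ∉ S → X ij.1 ij.2 = 0)

/-! ### Auxiliary development -/

section Aux

variable {m n : ℕ}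

/-- The ambient Euclidean space hosting the pair `(X * Ad, Ad * X)`. -/
noncomputable abbrev Espace (m n : ℕ) : Type :=
  EuclideanSpace ℂ ((Fin m × Fin m) ⊕ (Fin n × Fin n))

/-- The linear map `X ↦ (X * Ad, Ad * X)`. -/
noncomputable def Tmap (Ad : Matrix (Fin n) (Fin m) ℂ) :
    Matrix (Fin m) (Fin n) ℂ →ₗ[ℂ] Espace m n where
  toFun X := WithLp.toLp 2 (fun s => Sum.elim (fun p : Fin m × Fin m => (X * Ad) p.1 p.2)
    (fun p : Fin n × Fin n => (Ad * X) p.1 p.2) s)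
  map_add' X Y := by
    apply WithLp.ofLp_injective 2
    funext s
    cases s with
    | inl p =>
      show ((X + Y) * Ad) p.1 p.2 = (X * Ad) p.1 p.2 + (Y * Ad) p.1 p.2
      simp [Matrix.add_mul]
    | inr p =>
      show (Ad * (X + Y)) p.1 p.2 = (Ad * X) p.1 p.2 + (Ad * Y) p.1 p.2
      simp [Matrix.mul_add]
  map_smul' c X := by
    apply WithLp.ofLp_injective 2
    funext s
    cases s with
    | inl p =>
      show ((c • X) * Ad) p.1 p.2 = c * (X * Ad) p.1 p.2
      simp [Matrix.smul_mul]
    | inr p =>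
      show (Ad * (c • X)) p.1 p.2 = c * (Ad * X) p.1 p.2
      simp [Matrix.mul_smul]

lemma norm_Tmap_sq (Ad : Matrix (Fin n) (Fin m) ℂ) (Z : Matrix (Fin m) (Fin n) ℂ) :
    ‖Tmap Ad Z‖ ^ 2 = frobSq (Z * Ad) + frobSq (Ad * Z) := by
  rw [EuclideanSpace.norm_eq, Real.sq_sqrt (by positivity)]
  rw [Fintype.sum_sum_type]
  simp only [frobSq, ← Finset.sum_product', Fintype.sum_prod_type]
  rfl

lemma Jmis_eq (X A : Matrix (Fin m) (Fin n) ℂ) (Ad : Matrix (Fin n) (Fin m) ℂ) :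
    Jmis X A Ad = (1 / 2) * ‖Tmap Ad X - Tmap Ad A‖ ^ 2 := by
  rw [← map_sub, norm_Tmap_sq, Jmis]
  ring

/-- The feasible set as a ℂ-submodule. -/
noncomputable def FeasSub (A : Matrix (Fin m) (Fin n) ℂ) (S : Set (Fin m × Fin n)) :
    Submodule ℂ (Matrix (Fin m) (Fin n) ℂ) where
  carrier := {X | Feasible A X S}
  zero_mem' := by
    refine ⟨fun v _ => ?_, fun v _ => ?_, fun ij _ => rfl⟩ <;>
      simp [Matrix.zero_mulVec]
  add_mem' := by
    rintro X Y ⟨hX1, hX2, hX3⟩ ⟨hY1, hY2, hY3⟩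
    refine ⟨fun v hv => ?_, fun v hv => ?_, fun ij hij => ?_⟩
    · rw [Matrix.add_mulVec, hX1 v hv, hY1 v hv, add_zero]
    · rw [Matrix.conjTranspose_add, Matrix.add_mulVec, hX2 v hv, hY2 v hv, add_zero]
    · simp [hX3 ij hij, hY3 ij hij]
  smul_mem' := by
    rintro c X ⟨hX1, hX2, hX3⟩
    refine ⟨fun v hv => ?_, fun v hv => ?_, fun ij hij => ?_⟩
    · rw [Matrix.smul_mulVec, hX1 v hv, smul_zero]
    · rw [Matrix.conjTranspose_smul, Matrix.smul_mulVec, hX2 v hv, smul_zero]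
    · simp [hX3 ij hij]

lemma feasSub_mem_iff {A : Matrix (Fin m) (Fin n) ℂ} {S : Set (Fin m × Fin n)}
    {X : Matrix (Fin m) (Fin n) ℂ} : X ∈ FeasSub A S ↔ Feasible A X S := Iff.rfl

/-- From the nullspace condition, `X = X * (Ad * A)`. -/
lemma eq_mul_pinv_mul {A : Matrix (Fin m) (Fin n) ℂ} {Ad : Matrix (Fin n) (Fin m) ℂ}
    (hMP : IsMPInv A Ad) {X : Matrix (Fin m) (Fin n) ℂ}
    (h1 : ∀ v : Fin n → ℂ, A.mulVec v = 0 → X.mulVec v = 0) :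
    X = X * (Ad * A) := by
  have key : ∀ v : Fin n → ℂ, X.mulVec v = (X * (Ad * A)).mulVec v := by
    intro v
    have hAv : A.mulVec (v - (Ad * A).mulVec v) = 0 := by
      rw [Matrix.mulVec_sub, Matrix.mulVec_mulVec, ← Matrix.mul_assoc, hMP.1, sub_self]
    have := h1 _ hAv
    rw [Matrix.mulVec_sub, Matrix.mulVec_mulVec, sub_eq_zero] at this
    exact this
  ext i j
  have := congrFun (key (Pi.single j 1)) i
  simpa using this

/-- `Tmap Ad` is injective on the feasible set. -/
lemma Tmap_eq_zero {A : Matrix (Fin m) (Fin n) ℂ} {Ad : Matrix (Fin n) (Fin m) ℂ}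
    (hMP : IsMPInv A Ad) {X : Matrix (Fin m) (Fin n) ℂ}
    (h1 : ∀ v : Fin n → ℂ, A.mulVec v = 0 → X.mulVec v = 0)
    (hT : Tmap Ad X = 0) : X = 0 := by
  have hXAd : X * Ad = 0 := by
    ext p q
    have := congrArg (fun x : Espace m n => x (Sum.inl (p, q))) hT
    exact this
  calc X = X * (Ad * A) := eq_mul_pinv_mul hMP h1
    _ = (X * Ad) * A := by rw [Matrix.mul_assoc]
    _ = 0 := by rw [hXAd, Matrix.zero_mul]

end Aux

/-- for an arbitrary matrix `A` and arbitrary sparsity pattern `S`, there is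
exactly one minimizer of `J(·;A)` over the feasible set `F(A,S)`. -/
theorem stmt6 {m n : ℕ} (A : Matrix (Fin m) (Fin n) ℂ) (Ad : Matrix (Fin n) (Fin m) ℂ)
    (hMP : IsMPInv A Ad) (S : Set (Fin m × Fin n)) :
    ∃! X, Feasible A X S ∧ ∀ Y, Feasible A Y S → Jmis X A Ad ≤ Jmis Y A Ad := by
  classical
  set T : Matrix (Fin m) (Fin n) ℂ →ₗ[ℂ] Espace m n := Tmap Ad with hT
  set F : Submodule ℂ (Matrix (Fin m) (Fin n) ℂ) := FeasSub A S with hF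
  set K : Submodule ℂ (Espace m n) := F.map T with hK
  set u : Espace m n := T A with hu
  set y₀ : Espace m n := (K.orthogonalProjection u : Espace m n) with hy₀
  have hy₀K : y₀ ∈ K := (K.orthogonalProjection u).2
  obtain ⟨X₀, hX₀F, hTX₀⟩ := hy₀K
  have horth : ∀ w ∈ K, inner ℂ (u - y₀) w = (0 : ℂ) :=
    fun w hw => K.starProjection_inner_eq_zero u w hw
  -- key distance estimate via Pythagoras
  have hpyth : ∀ y ∈ K, ‖u - y‖ ^ 2 = ‖u - y₀‖ ^ 2 + ‖y₀ - y‖ ^ 2 := by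
    intro y hy
    have hmem : y₀ - y ∈ K := K.sub_mem (K.orthogonalProjection u).2 hy
    have hdecomp : u - y = (u - y₀) + (y₀ - y) := by abel
    rw [hdecomp, @norm_add_sq ℂ _ _ _ _ (u - y₀) (y₀ - y), horth _ hmem]
    simp
  have hmin : ∀ Y, Feasible A Y S → Jmis X₀ A Ad ≤ Jmis Y A Ad := by
    intro Y hY
    have hYK : T Y ∈ K := ⟨Y, hY, rfl⟩
    rw [Jmis_eq, Jmis_eq]
    have h1 : ‖Tmap Ad X₀ - Tmap Ad A‖ ^ 2 = ‖u - y₀‖ ^ 2 := by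
      rw [← hTX₀]
      rw [show (Tmap Ad X₀ : Espace m n) - Tmap Ad A = -(u - T X₀) by simp [hu, hT]]
      rw [norm_neg]
    have h2 : ‖Tmap Ad Y - Tmap Ad A‖ ^ 2 = ‖u - T Y‖ ^ 2 := by
      rw [show (Tmap Ad Y : Espace m n) - Tmap Ad A = -(u - T Y) by simp [hu, hT]]
      rw [norm_neg]
    rw [h1, h2, hpyth _ hYK]
    have : (0:ℝ) ≤ ‖y₀ - T Y‖ ^ 2 := by positivity
    linarith
  refine ⟨X₀, ⟨hX₀F, hmin⟩, ?_⟩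
  rintro Y ⟨hYfeas, hYmin⟩
  have hYK : T Y ∈ K := ⟨Y, hYfeas, rfl⟩
  -- J Y = J X₀
  have hJeq : Jmis Y A Ad = Jmis X₀ A Ad :=
    le_antisymm (hYmin X₀ hX₀F) (hmin Y hYfeas)
  have h1 : ‖u - T Y‖ ^ 2 = ‖u - y₀‖ ^ 2 := by
    have e1 : Jmis Y A Ad = (1/2) * ‖u - T Y‖ ^ 2 := by
      rw [Jmis_eq]
      rw [show (Tmap Ad Y : Espace m n) - Tmap Ad A = -(u - T Y) by simp [hu, hT]]
      rw [norm_neg]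
    have e2 : Jmis X₀ A Ad = (1/2) * ‖u - y₀‖ ^ 2 := by
      rw [Jmis_eq, ← hTX₀]
      rw [show (Tmap Ad X₀ : Espace m n) - Tmap Ad A = -(u - T X₀) by simp [hu, hT]]
      rw [norm_neg]
    rw [e1, e2] at hJeq
    linarith
  have h2 : ‖y₀ - T Y‖ = 0 := by
    have := hpyth _ hYK
    rw [h1] at this
    have : ‖y₀ - T Y‖ ^ 2 = 0 := by linarith
    exact pow_eq_zero_iff (by norm_num) |>.mp this
  have hTYy₀ : T Y = y₀ := by
    have := norm_sub_eq_zero_iff.mp h2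
    exact this.symm
  -- now Y - X₀ is feasible and in the kernel of T
  have hdiff : Y - X₀ ∈ F := F.sub_mem hYfeas hX₀F
  have hTdiff : T (Y - X₀) = 0 := by
    rw [map_sub, hTYy₀, hTX₀, sub_self]
  have : Y - X₀ = 0 := Tmap_eq_zero hMP hdiff.1 hTdiff
  exact sub_eq_zero.mp this
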